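/- The logistic function φ(x) = log(1 + eˣ) satisfies, for every t ∈ ℝ and all x ∈ ℝ, φ(x) ≤ φ(t) + φ'(t)(x−t) + (β(t)/2)(x−t)², where φ'(t) = eᵗ/(1+eᵗ) and β(t) = 1/4 if t = 0, and β(t) = (1/t)·(1/(1+e^{−t}) − 1/2) otherwise. -/

import Mathlib

open Real

noncomputable def B (t : ℝ) : ℝ :=
  if t = 0 then (1 : ℝ) / 4 else (1 / t) * (1 / (1 + Real.exp (-t)) - 1 / 2)

lemma B_eq {t : ℝ} (ht : t ≠ 0) :
    B t = (Real.exp t - 1) / (2 * t * (Real.exp t + 1)) := by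
  rw [B, if_neg ht, Real.exp_neg]
  have h1 : Real.exp t ≠ 0 := (Real.exp_pos t).ne'
  have h2 : (1 : ℝ) + (Real.exp t)⁻¹ ≠ 0 := by positivity
  have h3 : Real.exp t + 1 ≠ 0 := by positivity
  field_simp
  ring

lemma B_zero : B 0 = 1 / 4 := by simp [B]

lemma B_even (t : ℝ) : B (-t) = B t := by
  rcases eq_or_ne t 0 with h | h
  · simp [h]
  · rw [B_eq (neg_ne_zero.mpr h), B_eq h]
    have h1 : Real.exp t ≠ 0 := (Real.exp_pos t).ne'
    have h3 : Real.exp t + 1 ≠ 0 := by positivity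
    rw [Real.exp_neg]
    field_simp
    ring

lemma B_mul (t : ℝ) : B t * t = Real.exp t / (1 + Real.exp t) - 1 / 2 := by
  rcases eq_or_ne t 0 with h | h
  · simp [h]; norm_num
  · rw [B_eq h]
    have h3 : Real.exp t + 1 ≠ 0 := by positivity
    have h4 : (1 : ℝ) + Real.exp t ≠ 0 := by positivity
    field_simp
    ring

lemma S1 {y : ℝ} (hy : 0 ≤ y) : 2 * y * Real.exp y ≤ Real.exp (2 * y) - 1 := by
  have hs : y ≤ Real.sinh y := by
    rcases eq_or_lt_of_le hy with h | h
    · simp [← h]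
    · exact le_of_lt (Real.self_lt_sinh_iff.mpr h)
  have h1 : Real.sinh y = (Real.exp y - Real.exp (-y)) / 2 := Real.sinh_eq y
  have h2 : Real.exp (2 * y) = Real.exp y * Real.exp y := by
    rw [← Real.exp_add]; ring_nf
  have h3 : Real.exp (-y) * Real.exp y = 1 := by
    rw [← Real.exp_add]; simp
  nlinarith [Real.exp_pos y]

lemma S2 {v : ℝ} (hv : 0 ≤ v) : 2 * (Real.exp v - 1) ≤ v * (Real.exp v + 1) := by
  set q : ℝ → ℝ := fun v => v * (Real.exp v + 1) - 2 * (Real.exp v - 1) with hq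
  have hd : ∀ x : ℝ, HasDerivAt q ((Real.exp x + 1) + x * Real.exp x - 2 * Real.exp x) x := by
    intro x
    have h1 : HasDerivAt (fun x : ℝ => x * (Real.exp x + 1))
        (1 * (Real.exp x + 1) + x * Real.exp x) x :=
      (hasDerivAt_id x).mul ((Real.hasDerivAt_exp x).add_const 1)
    have h2 : HasDerivAt (fun x : ℝ => 2 * (Real.exp x - 1)) (2 * Real.exp x) x :=
      ((Real.hasDerivAt_exp x).sub_const 1).const_mul 2
    exact (h1.sub h2).congr_deriv (by ring)
  have hmono : MonotoneOn q (Set.Ici 0) := by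
    apply monotoneOn_of_deriv_nonneg (convex_Ici 0)
    · exact fun x _ => ((hd x).continuousAt).continuousWithinAt
    · exact fun x _ => ((hd x).differentiableAt).differentiableWithinAt
    · intro x hx
      rw [interior_Ici] at hx
      rw [(hd x).deriv]
      have hxx : (0:ℝ) < x := hx
      have h5 := Real.add_one_le_exp (-x)
      have h6 : Real.exp (-x) * Real.exp x = 1 := by rw [← Real.exp_add]; simp
      nlinarith [Real.exp_pos x]
  have h0 : q 0 ≤ q v := hmono (Set.mem_Ici.mpr le_rfl) hv hv
  simp only [hq] at h0
  norm_num at h0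
  linarith

lemma B_anti {u v : ℝ} (hu : 0 ≤ u) (huv : u ≤ v) : B v ≤ B u := by
  set g : ℝ → ℝ := fun y => (Real.exp y - 1) / (2 * y * (Real.exp y + 1)) with hg
  have hden : ∀ y : ℝ, 0 < y → (2 * y * (Real.exp y + 1)) ≠ 0 := by
    intro y hy; positivity
  have hgd : ∀ y : ℝ, 0 < y → HasDerivAt g
      ((Real.exp y * (2 * y * (Real.exp y + 1)) -
        (Real.exp y - 1) * (2 * (Real.exp y + 1) + 2 * y * Real.exp y)) /
        (2 * y * (Real.exp y + 1)) ^ 2) y := by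
    intro y hy
    have hnum : HasDerivAt (fun y : ℝ => Real.exp y - 1) (Real.exp y) y :=
      (Real.hasDerivAt_exp y).sub_const 1
    have hd1 : HasDerivAt (fun y : ℝ => 2 * y * (Real.exp y + 1))
        (2 * (Real.exp y + 1) + 2 * y * Real.exp y) y := by
      have := ((hasDerivAt_id y).const_mul 2).mul ((Real.hasDerivAt_exp y).add_const 1)
      exact this.congr_deriv (by simp only [id]; ring)
    exact hnum.div hd1 (hden y hy)
  have hganti : AntitoneOn g (Set.Ioi 0) := by
    apply antitoneOn_of_deriv_nonpos (convex_Ioi 0)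
    · exact fun y hy => ((hgd y hy).continuousAt).continuousWithinAt
    · intro y hy
      rw [interior_Ioi] at hy
      exact ((hgd y hy).differentiableAt).differentiableWithinAt
    · intro y hy
      rw [interior_Ioi] at hy
      rw [(hgd y hy).deriv]
      apply div_nonpos_of_nonpos_of_nonneg _ (by positivity)
      have h1 := S1 (le_of_lt hy)
      have h2 : Real.exp (2 * y) = Real.exp y * Real.exp y := by
        rw [← Real.exp_add]; ring_nf
      nlinarith [Real.exp_pos y]
  rcases eq_or_lt_of_le hu with h0 | h0
  · rcases eq_or_lt_of_le huv with h1 | h1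
    · rw [h1]
    · have hv : 0 < v := by linarith
      rw [← h0, B_zero, B_eq (ne_of_gt hv)]
      rw [div_le_div_iff₀ (by positivity) (by norm_num)]
      have := S2 (le_of_lt hv)
      nlinarith
  · have hv : 0 < v := lt_of_lt_of_le h0 huv
    rw [B_eq (ne_of_gt h0), B_eq (ne_of_gt hv)]
    exact hganti (Set.mem_Ioi.mpr h0) (Set.mem_Ioi.mpr hv) huv

lemma mul_nonneg_of_nonpos_nonpos' {a b : ℝ} (ha : a ≤ 0) (hb : b ≤ 0) : 0 ≤ a * b := by
  nlinarith

lemma log_neg_eq (t : ℝ) :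
    Real.log (1 + Real.exp (-t)) = Real.log (1 + Real.exp t) - t := by
  have h : (1:ℝ) + Real.exp (-t) = (1 + Real.exp t) * Real.exp (-t) := by
    rw [Real.exp_neg]
    have := (Real.exp_pos t).ne'
    field_simp
    ring
  rw [h, Real.log_mul (by positivity) (Real.exp_ne_zero _), Real.log_exp]
  ring

lemma sg_neg (t : ℝ) :
    Real.exp (-t) / (1 + Real.exp (-t)) = 1 - Real.exp t / (1 + Real.exp t) := by
  rw [Real.exp_neg]
  have h1 := (Real.exp_pos t).ne'
  have h2 : (1:ℝ) + Real.exp t ≠ 0 := by positivity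
  field_simp
  ring

noncomputable def F (t x : ℝ) : ℝ :=
  Real.log (1 + Real.exp t) + Real.exp t / (1 + Real.exp t) * (x - t)
    + B t / 2 * (x - t) ^ 2 - Real.log (1 + Real.exp x)

lemma hasDerivF (t x : ℝ) : HasDerivAt (F t) (x * (B t - B x)) x := by
  have h1 : HasDerivAt (fun x : ℝ => Real.exp t / (1 + Real.exp t) * (x - t))
      (Real.exp t / (1 + Real.exp t)) x := by
    simpa using ((hasDerivAt_id x).sub_const t).const_mul (Real.exp t / (1 + Real.exp t))
  have h2 : HasDerivAt (fun x : ℝ => B t / 2 * (x - t) ^ 2)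
      (B t / 2 * (2 * (x - t))) x := by
    have := (((hasDerivAt_id x).sub_const t).pow 2).const_mul (B t / 2)
    simpa using this
  have h3 : HasDerivAt (fun x : ℝ => Real.log (1 + Real.exp x))
      (Real.exp x / (1 + Real.exp x)) x := by
    have h := (Real.hasDerivAt_exp x).const_add 1
    simpa using h.log (by positivity)
  have h4 := ((h1.const_add (Real.log (1 + Real.exp t))).add h2).sub h3
  have heq : Real.exp t / (1 + Real.exp t) + B t / 2 * (2 * (x - t))
      - Real.exp x / (1 + Real.exp x) = x * (B t - B x) := by
    linear_combination B_mul x - B_mul t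
  rw [heq] at h4
  exact h4

lemma F_self (t : ℝ) : F t t = 0 := by simp [F]

lemma F_neg_self (t : ℝ) : F t (-t) = 0 := by
  simp only [F, log_neg_eq]
  linear_combination (2 * t) * B_mul t

lemma F_symm (t x : ℝ) : F (-t) (-x) = F t x := by
  simp only [F, B_even, log_neg_eq, sg_neg]
  ring

lemma F_nonneg_of_nonneg {t : ℝ} (ht : 0 ≤ t) (x : ℝ) : 0 ≤ F t x := by
  rcases le_or_gt t x with h | h
  · have hm : MonotoneOn (F t) (Set.Ici t) := by
      apply monotoneOn_of_deriv_nonneg (convex_Ici t)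
      · exact fun y _ => ((hasDerivF t y).continuousAt).continuousWithinAt
      · exact fun y _ => ((hasDerivF t y).differentiableAt).differentiableWithinAt
      · intro y hy
        rw [interior_Ici] at hy
        rw [(hasDerivF t y).deriv]
        have hy' : t < y := hy
        exact mul_nonneg (by linarith) (by linarith [B_anti ht (le_of_lt hy')])
    have := hm (Set.mem_Ici.mpr le_rfl) (Set.mem_Ici.mpr h) h
    rwa [F_self] at this
  · rcases le_or_gt 0 x with h2 | h2
    · have ha : AntitoneOn (F t) (Set.Icc 0 t) := by
        apply antitoneOn_of_deriv_nonpos (convex_Icc 0 t)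
        · exact fun y _ => ((hasDerivF t y).continuousAt).continuousWithinAt
        · intro y hy
          exact ((hasDerivF t y).differentiableAt).differentiableWithinAt
        · intro y hy
          rw [interior_Icc] at hy
          rw [(hasDerivF t y).deriv]
          exact mul_nonpos_of_nonneg_of_nonpos (le_of_lt hy.1)
            (by linarith [B_anti (le_of_lt hy.1) (le_of_lt hy.2)])
      have := ha (Set.mem_Icc.mpr ⟨h2, le_of_lt h⟩)
        (Set.mem_Icc.mpr ⟨ht, le_rfl⟩) (le_of_lt h)
      rwa [F_self] at this
    · rcases le_or_gt (-t) x with h3 | h3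
      · have hm : MonotoneOn (F t) (Set.Icc (-t) 0) := by
          apply monotoneOn_of_deriv_nonneg (convex_Icc (-t) 0)
          · exact fun y _ => ((hasDerivF t y).continuousAt).continuousWithinAt
          · intro y hy
            exact ((hasDerivF t y).differentiableAt).differentiableWithinAt
          · intro y hy
            rw [interior_Icc] at hy
            rw [(hasDerivF t y).deriv]
            have hBy : B t ≤ B y := by
              rw [← B_even y]
              exact B_anti (by linarith [hy.2]) (by linarith [hy.1])
            exact mul_nonneg_of_nonpos_nonpos' (le_of_lt hy.2) (by linarith)
        have := hm (Set.mem_Icc.mpr ⟨le_rfl, by linarith⟩)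
          (Set.mem_Icc.mpr ⟨h3, le_of_lt h2⟩) h3
        rwa [F_neg_self] at this
      · have ha : AntitoneOn (F t) (Set.Iic (-t)) := by
          apply antitoneOn_of_deriv_nonpos (convex_Iic (-t))
          · exact fun y _ => ((hasDerivF t y).continuousAt).continuousWithinAt
          · intro y hy
            exact ((hasDerivF t y).differentiableAt).differentiableWithinAt
          · intro y hy
            rw [interior_Iic] at hy
            have hy' : y < -t := hy
            rw [(hasDerivF t y).deriv]
            have hBy : B y ≤ B t := by
              rw [← B_even y]
              exact B_anti ht (by linarith)
            exact mul_nonpos_of_nonpos_of_nonneg (by linarith) (by linarith)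
        have := ha (Set.mem_Iic.mpr (le_of_lt h3)) (Set.mem_Iic.mpr le_rfl) (le_of_lt h3)
        rwa [F_neg_self] at this

lemma F_nonneg (t x : ℝ) : 0 ≤ F t x := by
  rcases le_or_gt 0 t with ht | ht
  · exact F_nonneg_of_nonneg ht x
  · have := F_nonneg_of_nonneg (t := -t) (by linarith) (-x)
    rwa [F_symm] at this

theorem stmt5 :
    ∀ t x : ℝ,
      Real.log (1 + Real.exp x) ≤
        Real.log (1 + Real.exp t) + (Real.exp t / (1 + Real.exp t)) * (x - t)
          + (if t = 0 then (1 : ℝ) / 4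
             else (1 / t) * (1 / (1 + Real.exp (-t)) - 1 / 2)) / 2 * (x - t) ^ 2 := by
  intro t x
  have hB : (if t = 0 then (1 : ℝ) / 4
      else (1 / t) * (1 / (1 + Real.exp (-t)) - 1 / 2)) = B t := rfl
  rw [hB]
  have := F_nonneg t x
  simp only [F] at this
  linarith
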